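/- Let d ≥ 1 be an integer and let μ be a nonnegative Borel measure on ℝ^d satisfying Dalang's condition. For an integer n ≥ 1 and t > 0 define J_n(t) = ∫_{0<s₁<⋯<s_n<t} ∏_{j=1}^n ( ∫_{ℝ^d} e^{−(s_j−s_{j−1})|ξ|²} dμ(ξ) ) ds₁⋯ds_n, with the convention s₀ = 0. Then for every integer N ≥ 0 and every t > 0 the series Σ_{n=1}^∞ n^N · J_n(t) converges (is finite). -/

import Mathlib

open MeasureTheory Set Real Filter
open scoped ENNReal NNReal

namespace SimplexAux


variable {d : ℕ} (μ : Measure (EuclideanSpace ℝ (Fin d)))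

noncomputable def g (m : ℝ) (x : ℝ) : ℝ≥0∞ :=
  ∫⁻ ξ, ENNReal.ofReal (Real.exp (-x * (m + ‖ξ‖ ^ 2))) ∂μ

noncomputable def Y (m : ℝ) : ℝ≥0∞ :=
  ∫⁻ ξ, ENNReal.ofReal (m + ‖ξ‖ ^ 2)⁻¹ ∂μ

lemma sigmaFinite_of_dalang
    (hD : ∫⁻ ξ, ENNReal.ofReal (1 + ‖ξ‖ ^ 2)⁻¹ ∂μ < ⊤) : SigmaFinite μ := by
  refine ⟨⟨⟨fun n => Metric.closedBall 0 n, fun _ => trivial, fun n => ?_,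
    Metric.iUnion_closedBall_nat 0⟩⟩⟩
  have hc : (0:ℝ) < (1 + (n:ℝ) ^ 2)⁻¹ := by positivity
  have hle : ENNReal.ofReal (1 + (n:ℝ) ^ 2)⁻¹ * μ (Metric.closedBall 0 n)
      ≤ ∫⁻ ξ, ENNReal.ofReal (1 + ‖ξ‖ ^ 2)⁻¹ ∂μ := by
    rw [← setLIntegral_const]
    refine le_trans (setLIntegral_mono' (measurableSet_closedBall) ?_) (setLIntegral_le_lintegral _ _)
    intro ξ hξ
    apply ENNReal.ofReal_le_ofReal
    apply inv_anti₀ (by positivity)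
    have : ‖ξ‖ ≤ n := by simpa [Metric.mem_closedBall, dist_zero_right] using hξ
    nlinarith [norm_nonneg ξ]
  have h2 : ENNReal.ofReal (1 + (n:ℝ) ^ 2)⁻¹ * μ (Metric.closedBall 0 n) < ⊤ :=
    lt_of_le_of_lt hle hD
  by_contra h
  rw [lt_top_iff_ne_top] at h
  push_neg at h
  rw [h, ENNReal.mul_top (by simp [ENNReal.ofReal_eq_zero, hc, not_le.mpr hc])] at h2
  exact absurd h2 (by simp)

variable [SigmaFinite μ]

lemma measurable_g (m : ℝ) : Measurable (g μ m) := by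
  unfold g
  refine Measurable.lintegral_prod_right ?_
  apply Measurable.ennreal_ofReal
  fun_prop

lemma lintegral_exp_neg_mul {c : ℝ} (hc : 0 < c) :
    ∫⁻ x in Ioi (0:ℝ), ENNReal.ofReal (Real.exp (-x * c)) = ENNReal.ofReal c⁻¹ := by
  rw [← ofReal_integral_eq_lintegral_ofReal]
  · congr 1
    have := integral_comp_mul_right_Ioi (fun x => Real.exp (-x)) 0 hc
    simp only [zero_mul, smul_eq_mul, integral_exp_neg_Ioi, neg_zero, Real.exp_zero, mul_one] at this
    calc ∫ x in Ioi (0:ℝ), Real.exp (-x * c) = ∫ x in Ioi (0:ℝ), Real.exp (-(x * c)) := by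
          simp [neg_mul]
      _ = c⁻¹ := this
  · have := exp_neg_integrableOn_Ioi 0 hc
    apply this.congr_fun (fun x _ => by ring_nf) measurableSet_Ioi
  · filter_upwards with x using Real.exp_nonneg _

lemma lintegral_g (m : ℝ) (hm : 0 < m) :
    ∫⁻ x in Ioi (0:ℝ), g μ m x = Y μ m := by
  unfold g Y
  rw [lintegral_lintegral_swap]
  · refine lintegral_congr fun ξ => ?_
    exact lintegral_exp_neg_mul (by positivity)
  · apply Measurable.aemeasurable
    apply Measurable.ennreal_ofReal
    fun_prop

lemma lintegral_g_shift (m : ℝ) (hm : 0 < m) (c : ℝ) :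
    ∫⁻ x in Ioi c, g μ m (x - c) = Y μ m := by
  rw [← lintegral_g μ m hm]
  have h := (measurePreserving_add_right (volume : Measure ℝ) c).setLIntegral_comp_preimage_emb
    (measurableEmbedding_addRight c) (fun x => g μ m (x - c)) (Ioi c)
  have hpre : (fun x => x + c) ⁻¹' Ioi c = Ioi 0 := by
    ext x; simp [mem_Ioi]
  rw [hpre] at h
  rw [← h]
  refine setLIntegral_congr_fun measurableSet_Ioi (fun x _ => by ring_nf)



lemma castSucc_sub_one {n : ℕ} (j : Fin (n + 1)) (hj : j ≠ 0) :
    Fin.castSucc j - 1 = Fin.castSucc (j - 1) := by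
  have h1 : Fin.castSucc j ≠ 0 := by
    exact Fin.castSucc_ne_zero_iff.mpr hj
  apply Fin.ext
  simp only [Fin.coe_castSucc, Fin.coe_sub_one, h1, hj, if_false]

lemma last_sub_one {n : ℕ} : (Fin.last (n + 1)) - 1 = Fin.castSucc (Fin.last n) := by
  apply Fin.ext
  rw [Fin.coe_sub_one]
  simp [Fin.ext_iff]

lemma pre_castSucc {n : ℕ} (s : Fin (n + 2) → ℝ) (j : Fin (n + 1)) :
    (if Fin.castSucc j = 0 then (0:ℝ) else s (Fin.castSucc j - 1))
      = (if j = 0 then 0 else (s ∘ Fin.castSucc) (j - 1)) := by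
  by_cases hj : j = 0
  · subst hj; simp
  · have h1 : Fin.castSucc j ≠ 0 := by
      exact Fin.castSucc_ne_zero_iff.mpr hj
    rw [if_neg hj, if_neg h1, castSucc_sub_one j hj]
    rfl

lemma telescope : ∀ (n : ℕ) (s : Fin (n + 1) → ℝ),
    ∑ j, (s j - (if j = 0 then 0 else s (j - 1))) = s (Fin.last n) := by
  intro n
  induction n with
  | zero => intro s; simp [Fin.last]
  | succ n ih =>
    intro s
    rw [Fin.sum_univ_castSucc]
    have h1 : ∀ j : Fin (n + 1),
        s (Fin.castSucc j) - (if Fin.castSucc j = 0 then (0:ℝ) else s (Fin.castSucc j - 1))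
          = (s ∘ Fin.castSucc) j - (if j = 0 then 0 else (s ∘ Fin.castSucc) (j - 1)) := by
      intro j; rw [pre_castSucc s j]; rfl
    rw [Finset.sum_congr rfl fun j _ => h1 j, ih (s ∘ Fin.castSucc)]
    have h2 : Fin.last (n + 1) ≠ 0 := by simp [Fin.ext_iff]
    rw [if_neg h2, last_sub_one]
    simp

lemma measurableSet_strictMono {n : ℕ} :
    MeasurableSet {s : Fin n → ℝ | StrictMono s} := by
  have : {s : Fin n → ℝ | StrictMono s}
      = ⋂ (p : Fin n × Fin n) (_ : p.1 < p.2), {s | s p.1 < s p.2} := by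
    ext s
    simp only [mem_setOf_eq, mem_iInter, Prod.forall]
    exact ⟨fun h a b hab => h hab, fun h a b hab => h a b hab⟩
  rw [this]
  exact MeasurableSet.iInter fun p => MeasurableSet.iInter fun _ =>
    measurableSet_lt (measurable_pi_apply _) (measurable_pi_apply _)

lemma measurableSet_simplex {n : ℕ} (t : ℝ) :
    MeasurableSet {s : Fin (n + 1) → ℝ | StrictMono s ∧ ∀ i, s i ∈ Ioo 0 t} := by
  have : {s : Fin (n + 1) → ℝ | StrictMono s ∧ ∀ i, s i ∈ Ioo 0 t}
      = {s | StrictMono s} ∩ ⋂ i, {s | s i ∈ Ioo 0 t} := by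
    ext s; simp [mem_iInter]
  rw [this]
  exact measurableSet_strictMono.inter (MeasurableSet.iInter fun i =>
    (measurable_pi_apply i) measurableSet_Ioo)

lemma measurable_prodg {n : ℕ} (m : ℝ) :
    Measurable fun z : Fin (n + 1) → ℝ =>
      ∏ j, g μ m (z j - (if j = 0 then 0 else z (j - 1))) := by
  apply Finset.measurable_prod
  intro j _
  apply (measurable_g μ m).comp
  apply Measurable.sub (measurable_pi_apply j)
  by_cases hj : j = 0
  · simp only [hj, if_pos]; exact measurable_const
  · simp only [hj, if_neg, if_false]; exact measurable_pi_apply _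

lemma simplex_bound (m t : ℝ) (hm : 0 < m) :
    ∀ n : ℕ, ∫⁻ s : Fin (n + 1) → ℝ in {s | StrictMono s ∧ ∀ i, s i ∈ Ioo 0 t},
        ∏ j, g μ m (s j - (if j = 0 then 0 else s (j - 1))) ≤ Y μ m ^ (n + 1) := by
  intro n
  induction n with
  | zero =>
    have hset : {s : Fin 1 → ℝ | StrictMono s ∧ ∀ i, s i ∈ Ioo 0 t} ⊆ {s | s 0 ∈ Ioi 0} := by
      intro s hs
      exact (hs.2 0).1
    have h1 : ∀ s : Fin 1 → ℝ,
        (∏ j, g μ m (s j - (if j = 0 then 0 else s (j - 1)))) = g μ m (s 0) := by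
      intro s
      rw [Fin.prod_univ_one, if_pos rfl, sub_zero]
    calc ∫⁻ s : Fin 1 → ℝ in {s | StrictMono s ∧ ∀ i, s i ∈ Ioo 0 t},
          ∏ j, g μ m (s j - (if j = 0 then 0 else s (j - 1)))
        = ∫⁻ s : Fin 1 → ℝ in {s | StrictMono s ∧ ∀ i, s i ∈ Ioo 0 t}, g μ m (s 0) := by
          exact lintegral_congr fun s => h1 s
      _ ≤ ∫⁻ s : Fin 1 → ℝ in {s : Fin 1 → ℝ | s 0 ∈ Ioi 0}, g μ m (s 0) :=
          lintegral_mono_set hset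
      _ = ∫⁻ x in Ioi (0:ℝ), g μ m x := by
          have mp := volume_preserving_funUnique (Fin 1) ℝ
          have := mp.setLIntegral_comp_preimage_emb
            (MeasurableEquiv.funUnique (Fin 1) ℝ).measurableEmbedding (g μ m) (Ioi 0)
          rw [← this]
          rfl
      _ = Y μ m := by
          rw [← lintegral_g_shift μ m hm 0]
          exact setLIntegral_congr_fun measurableSet_Ioi (fun x _ => by
            rw [sub_zero])
      _ = Y μ m ^ (0 + 1) := by rw [pow_one]
  | succ n ih =>
    set S : Set (Fin (n + 2) → ℝ) := {s | StrictMono s ∧ ∀ i, s i ∈ Ioo 0 t} with hS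
    set S' : Set (Fin (n + 1) → ℝ) := {s | StrictMono s ∧ ∀ i, s i ∈ Ioo 0 t} with hS'
    set A : (Fin (n + 1) → ℝ) → ℝ≥0∞ :=
      fun z => ∏ j, g μ m (z j - (if j = 0 then 0 else z (j - 1))) with hA
    set G : (Fin (n + 2) → ℝ) → ℝ≥0∞ :=
      fun s => ∏ j, g μ m (s j - (if j = 0 then 0 else s (j - 1))) with hG
    set e := MeasurableEquiv.piFinSuccAbove (fun _ : Fin (n + 2) => ℝ) (Fin.last (n + 1)) with he
    have mp := (volume_preserving_piFinSuccAbove (fun _ : Fin (n + 2) => ℝ) (Fin.last (n + 1))).symm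
    set T : Set (ℝ × (Fin (n + 1) → ℝ)) :=
      {p | p.2 ∈ S' ∧ p.1 ∈ Ioo (p.2 (Fin.last n)) t} with hT
    -- coordinates of e.symm
    have hs1 : ∀ (y : ℝ) (z : Fin (n + 1) → ℝ) (j : Fin (n + 1)),
        e.symm (y, z) (Fin.castSucc j) = z j := by
      intro y z j
      rw [he, MeasurableEquiv.piFinSuccAbove_symm_apply]
      simp only [Fin.insertNthEquiv_apply]
      rw [← Fin.succAbove_last]
      exact Fin.insertNth_apply_succAbove _ _ _ _
    have hs2 : ∀ (y : ℝ) (z : Fin (n + 1) → ℝ), e.symm (y, z) (Fin.last (n + 1)) = y := by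
      intro y z
      rw [he, MeasurableEquiv.piFinSuccAbove_symm_apply]
      simp only [Fin.insertNthEquiv_apply]
      exact Fin.insertNth_apply_same _ _ _
    have key : ∀ (y : ℝ) (z : Fin (n + 1) → ℝ),
        G (e.symm (y, z)) = A z * g μ m (y - z (Fin.last n)) := by
      intro y z
      have hcomp : (e.symm (y, z)) ∘ Fin.castSucc = z := funext (hs1 y z)
      rw [hG]
      simp only
      rw [Fin.prod_univ_castSucc]
      congr 1
      · rw [hA]
        refine Finset.prod_congr rfl fun j _ => ?_
        rw [pre_castSucc (e.symm (y, z)) j, hcomp]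
        rw [show (e.symm (y,z)) (Fin.castSucc j) = z j from hs1 y z j]
      · have hlast0 : Fin.last (n + 1) ≠ 0 := by simp [Fin.ext_iff]
        rw [if_neg hlast0, last_sub_one, hs2, hs1]
    have hsub : ⇑e.symm ⁻¹' S ⊆ T := by
      rintro ⟨y, z⟩ hp
      have hmono : StrictMono (e.symm (y, z)) := hp.1
      have hbdd := hp.2
      refine ⟨⟨fun a b hab => ?_, fun i => ?_⟩, ?_, ?_⟩
      · have := hmono (show Fin.castSucc a < Fin.castSucc b by exact_mod_cast hab)
        rwa [hs1, hs1] at this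
      · have := hbdd (Fin.castSucc i)
        rwa [hs1] at this
      · have : e.symm (y, z) (Fin.castSucc (Fin.last n)) < e.symm (y, z) (Fin.last (n + 1)) :=
          hmono (by simp [Fin.lt_def])
        rwa [hs1, hs2] at this
      · have := hbdd (Fin.last (n + 1))
        rw [hs2] at this
        exact this.2
    have hT_meas : MeasurableSet T := by
      have : T = {p : ℝ × (Fin (n + 1) → ℝ) | p.2 ∈ S'} ∩
          ({p | p.2 (Fin.last n) < p.1} ∩ {p | p.1 < t}) := by
        ext p; simp [hT, mem_Ioo, and_assoc]
      rw [this]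
      have h1 : MeasurableSet {p : ℝ × (Fin (n + 1) → ℝ) | p.2 (Fin.last n) < p.1} :=
        measurableSet_lt (by fun_prop) (by fun_prop)
      have h2 : MeasurableSet {p : ℝ × (Fin (n + 1) → ℝ) | p.1 < t} :=
        measurableSet_lt (by fun_prop) measurable_const
      exact ((measurableSet_simplex t).preimage measurable_snd).inter (h1.inter h2)
    have hA_meas : Measurable A := measurable_prodg μ m
    set F : ℝ × (Fin (n + 1) → ℝ) → ℝ≥0∞ :=
      fun p => A p.2 * g μ m (p.1 - p.2 (Fin.last n)) with hF
    have hF_meas : Measurable F := by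
      refine (hA_meas.comp measurable_snd).mul ?_
      exact (measurable_g μ m).comp
        (measurable_fst.sub ((measurable_pi_apply _).comp measurable_snd))
    have step1 : ∫⁻ s in S, G s = ∫⁻ p in ⇑e.symm ⁻¹' S, G (e.symm p) := by
      exact (mp.setLIntegral_comp_preimage_emb e.symm.measurableEmbedding G S).symm
    have step2 : ∫⁻ p in ⇑e.symm ⁻¹' S, G (e.symm p) = ∫⁻ p in ⇑e.symm ⁻¹' S, F p := by
      refine lintegral_congr fun p => ?_
      rw [show p = (p.1, p.2) from rfl, key p.1 p.2]
    have step3 : ∫⁻ p in ⇑e.symm ⁻¹' S, F p ≤ ∫⁻ p in T, F p := lintegral_mono_set hsub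
    have step4 : ∫⁻ p in T, F p ≤ Y μ m ^ (n + 1) * Y μ m := by
      rw [← lintegral_indicator hT_meas]
      rw [Measure.volume_eq_prod]
      rw [lintegral_prod_symm _ ((hF_meas.indicator hT_meas).aemeasurable)]
      have h_inner : ∀ z : Fin (n + 1) → ℝ,
          (∫⁻ y, T.indicator F (y, z)) ≤ S'.indicator (fun z => A z * Y μ m) z := by
        intro z
        by_cases hz : z ∈ S'
        · have hptwise : ∀ y, T.indicator F (y, z)
              = (Ioo (z (Fin.last n)) t).indicator
                  (fun y => A z * g μ m (y - z (Fin.last n))) y := by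
            intro y
            by_cases hy : y ∈ Ioo (z (Fin.last n)) t
            · rw [indicator_of_mem (show ((y, z) : ℝ × (Fin (n+1) → ℝ)) ∈ T from ⟨hz, hy⟩),
                indicator_of_mem hy]
            · rw [indicator_of_notMem (fun h => hy h.2), indicator_of_notMem hy]
          calc (∫⁻ y, T.indicator F (y, z))
              = ∫⁻ y in Ioo (z (Fin.last n)) t, A z * g μ m (y - z (Fin.last n)) := by
                rw [← lintegral_indicator measurableSet_Ioo]
                exact lintegral_congr hptwise
            _ = A z * ∫⁻ y in Ioo (z (Fin.last n)) t, g μ m (y - z (Fin.last n)) := by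
                have hgm : Measurable fun y : ℝ => g μ m (y - z (Fin.last n)) :=
                  (measurable_g μ m).comp (measurable_sub_const _)
                rw [lintegral_const_mul _ hgm]
            _ ≤ A z * Y μ m := by
                gcongr
                calc ∫⁻ y in Ioo (z (Fin.last n)) t, g μ m (y - z (Fin.last n))
                    ≤ ∫⁻ y in Ioi (z (Fin.last n)), g μ m (y - z (Fin.last n)) :=
                      lintegral_mono_set Ioo_subset_Ioi_self
                  _ = Y μ m := lintegral_g_shift μ m hm _
            _ = S'.indicator (fun z => A z * Y μ m) z := by rw [indicator_of_mem hz]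
        · have hzero : ∀ y, T.indicator F (y, z) = 0 := fun y =>
            indicator_of_notMem (fun h => hz h.1) _
          simp [hzero, indicator_of_notMem hz]
      calc ∫⁻ z, ∫⁻ y, T.indicator F (y, z)
          ≤ ∫⁻ z, S'.indicator (fun z => A z * Y μ m) z := lintegral_mono h_inner
        _ = ∫⁻ z in S', A z * Y μ m := lintegral_indicator (measurableSet_simplex t) _
        _ = (∫⁻ z in S', A z) * Y μ m := lintegral_mul_const _ hA_meas
        _ ≤ Y μ m ^ (n + 1) * Y μ m := mul_le_mul_left ih _
    calc ∫⁻ s in S, G s ≤ Y μ m ^ (n + 1) * Y μ m := by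
          rw [step1, step2]; exact le_trans step3 step4
      _ = Y μ m ^ (n + 1 + 1) := (pow_succ _ _).symm

lemma Jn_bound (m t : ℝ) (hm : 0 < m) (n : ℕ) :
    ∫⁻ s : Fin (n + 1) → ℝ in {s | StrictMono s ∧ ∀ i, s i ∈ Ioo 0 t},
        ∏ j : Fin (n + 1), ∫⁻ ξ, ENNReal.ofReal
          (Real.exp (-(s j - (if j = 0 then 0 else s (j - 1))) * ‖ξ‖ ^ 2)) ∂μ
      ≤ ENNReal.ofReal (Real.exp (m * t)) * Y μ m ^ (n + 1) := by
  have hmeas_xi : ∀ c : ℝ, Measurable fun ξ : EuclideanSpace ℝ (Fin d) =>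
      ENNReal.ofReal (Real.exp (-c * (m + ‖ξ‖ ^ 2))) := by
    intro c; apply Measurable.ennreal_ofReal; fun_prop
  have hfactor : ∀ c : ℝ,
      (∫⁻ ξ, ENNReal.ofReal (Real.exp (-c * ‖ξ‖ ^ 2)) ∂μ)
        = ENNReal.ofReal (Real.exp (m * c)) * g μ m c := by
    intro c
    unfold g
    rw [← lintegral_const_mul _ (hmeas_xi c)]
    refine lintegral_congr fun ξ => ?_
    rw [← ENNReal.ofReal_mul (Real.exp_nonneg _), ← Real.exp_add]
    congr 2
    ring
  have hpt : ∀ s ∈ {s : Fin (n + 1) → ℝ | StrictMono s ∧ ∀ i, s i ∈ Ioo 0 t},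
      (∏ j : Fin (n + 1), ∫⁻ ξ, ENNReal.ofReal
          (Real.exp (-(s j - (if j = 0 then 0 else s (j - 1))) * ‖ξ‖ ^ 2)) ∂μ)
        ≤ ENNReal.ofReal (Real.exp (m * t)) *
            ∏ j : Fin (n + 1), g μ m (s j - (if j = 0 then 0 else s (j - 1))) := by
    intro s hs
    have h1 : (∏ j : Fin (n + 1), ∫⁻ ξ, ENNReal.ofReal
          (Real.exp (-(s j - (if j = 0 then 0 else s (j - 1))) * ‖ξ‖ ^ 2)) ∂μ)
        = (∏ j : Fin (n + 1), ENNReal.ofReal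
              (Real.exp (m * (s j - (if j = 0 then 0 else s (j - 1)))))) *
            ∏ j : Fin (n + 1), g μ m (s j - (if j = 0 then 0 else s (j - 1))) := by
      rw [← Finset.prod_mul_distrib]
      exact Finset.prod_congr rfl fun j _ => hfactor _
    rw [h1]
    refine mul_le_mul_left ?_ _
    rw [← ENNReal.ofReal_prod_of_nonneg (fun j _ => Real.exp_nonneg _)]
    apply ENNReal.ofReal_le_ofReal
    rw [← Real.exp_sum]
    apply Real.exp_le_exp.mpr
    rw [← Finset.mul_sum, telescope n s]
    have hlt : s (Fin.last n) ≤ t := le_of_lt (hs.2 (Fin.last n)).2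
    nlinarith [hm.le]
  calc ∫⁻ s : Fin (n + 1) → ℝ in {s | StrictMono s ∧ ∀ i, s i ∈ Ioo 0 t},
        ∏ j : Fin (n + 1), ∫⁻ ξ, ENNReal.ofReal
          (Real.exp (-(s j - (if j = 0 then 0 else s (j - 1))) * ‖ξ‖ ^ 2)) ∂μ
      ≤ ∫⁻ s : Fin (n + 1) → ℝ in {s | StrictMono s ∧ ∀ i, s i ∈ Ioo 0 t},
          ENNReal.ofReal (Real.exp (m * t)) *
            ∏ j : Fin (n + 1), g μ m (s j - (if j = 0 then 0 else s (j - 1))) :=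
        setLIntegral_mono' (measurableSet_simplex t) hpt
    _ = ENNReal.ofReal (Real.exp (m * t)) *
          ∫⁻ s : Fin (n + 1) → ℝ in {s | StrictMono s ∧ ∀ i, s i ∈ Ioo 0 t},
            ∏ j : Fin (n + 1), g μ m (s j - (if j = 0 then 0 else s (j - 1))) :=
        lintegral_const_mul _ (measurable_prodg μ m)
    _ ≤ ENNReal.ofReal (Real.exp (m * t)) * Y μ m ^ (n + 1) :=
        mul_le_mul_right (simplex_bound μ m t hm n) _


lemma exists_Y_lt_one
    (hD : ∫⁻ ξ, ENNReal.ofReal (1 + ‖ξ‖ ^ 2)⁻¹ ∂μ < ⊤) :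
    ∃ m : ℝ, 0 < m ∧ Y μ m < 1 := by
  have htend : Tendsto (fun k : ℕ => Y μ (1 + k)) atTop (nhds 0) := by
    have h0 : (0 : ℝ≥0∞) = ∫⁻ ξ, (fun _ : EuclideanSpace ℝ (Fin d) => (0:ℝ≥0∞)) ξ ∂μ := by
      simp
    rw [h0]
    apply tendsto_lintegral_of_dominated_convergence
      (bound := fun ξ => ENNReal.ofReal (1 + ‖ξ‖ ^ 2)⁻¹)
    · intro k
      apply Measurable.ennreal_ofReal
      fun_prop
    · intro k
      filter_upwards with ξ
      apply ENNReal.ofReal_le_ofReal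
      apply inv_anti₀ (by positivity)
      have : (0:ℝ) ≤ (k:ℝ) := k.cast_nonneg
      nlinarith [sq_nonneg ‖ξ‖]
    · exact hD.ne
    · filter_upwards with ξ
      have hreal : Tendsto (fun k : ℕ => ((1 + (k:ℝ)) + ‖ξ‖ ^ 2)⁻¹) atTop (nhds 0) := by
        apply tendsto_inv_atTop_zero.comp
        apply tendsto_atTop_add_const_right
        exact tendsto_atTop_add_const_left _ _ tendsto_natCast_atTop_atTop
      have := ENNReal.tendsto_ofReal hreal
      rw [ENNReal.ofReal_zero] at this
      exact this
  have hev := htend.eventually_lt_const (show (0:ℝ≥0∞) < 1 by norm_num)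
  obtain ⟨k, hk⟩ := hev.exists
  exact ⟨1 + k, by positivity, hk⟩

lemma series_lt_top (N : ℕ) {r : ℝ≥0∞} (hr : r < 1) :
    ∑' n : ℕ, ((n + 1 : ℕ) : ℝ≥0∞) ^ N * r ^ (n + 1) < ⊤ := by
  set r' : ℝ≥0 := r.toNNReal with hr'def
  have hcoe : (r' : ℝ≥0∞) = r := ENNReal.coe_toNNReal (hr.trans_le le_top).ne
  rw [← hcoe] at hr ⊢
  rw [← ENNReal.coe_one, ENNReal.coe_lt_coe] at hr
  have hsum : Summable fun n : ℕ => (((n + 1 : ℕ) : ℝ≥0)) ^ N * r' ^ (n + 1) := by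
    rw [← NNReal.summable_coe]
    have h1 : Summable fun n : ℕ => ((n : ℝ)) ^ N * (r' : ℝ) ^ n :=
      summable_pow_mul_geometric_of_norm_lt_one N
        (by rw [Real.norm_of_nonneg r'.coe_nonneg]; exact_mod_cast hr)
    have h2 := (summable_nat_add_iff 1).2 h1
    apply h2.congr
    intro n
    push_cast
    ring
  have heq : ∀ n : ℕ, ((n + 1 : ℕ) : ℝ≥0∞) ^ N * (r' : ℝ≥0∞) ^ (n + 1)
      = ((((n + 1 : ℕ) : ℝ≥0) ^ N * r' ^ (n + 1) : ℝ≥0) : ℝ≥0∞) := by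
    intro n
    push_cast
    ring
  rw [tsum_congr heq, lt_top_iff_ne_top]
  exact ENNReal.tsum_coe_ne_top_iff_summable.mpr hsum


end SimplexAux

/-- Under Dalang's condition, with
`J_n(t) = ∫_{0<s₁<⋯<s_n<t} ∏_{j=1}^n (∫ e^{-(s_j-s_{j-1})|ξ|²} dμ(ξ)) ds` (where `s₀ = 0`),
the series `Σ_{n≥1} n^N J_n(t)` converges for every `N ≥ 0` and `t > 0`. -/
theorem series_of_simplex_integrals_finite
    (d : ℕ) (hd : 1 ≤ d) (μ : Measure (EuclideanSpace ℝ (Fin d)))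
    (hDalang : ∫⁻ ξ, ENNReal.ofReal (1 + ‖ξ‖ ^ 2)⁻¹ ∂μ < ⊤)
    (N : ℕ) (t : ℝ) (ht : 0 < t) :
    ∑' n : ℕ, ((n + 1 : ℕ) : ENNReal) ^ N *
      ∫⁻ s : Fin (n + 1) → ℝ in {s | StrictMono s ∧ ∀ i, s i ∈ Set.Ioo 0 t},
        ∏ j : Fin (n + 1),
          ∫⁻ ξ, ENNReal.ofReal
            (Real.exp (-(s j - (if j = 0 then 0 else s (j - 1))) * ‖ξ‖ ^ 2)) ∂μ < ⊤ := by
  haveI : SigmaFinite μ := SimplexAux.sigmaFinite_of_dalang μ hDalang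
  obtain ⟨m, hm, hY⟩ := SimplexAux.exists_Y_lt_one μ hDalang
  refine lt_of_le_of_lt (ENNReal.tsum_le_tsum fun n =>
    mul_le_mul_right (SimplexAux.Jn_bound μ m t hm n) _) ?_
  have heq : ∀ n : ℕ, ((n + 1 : ℕ) : ENNReal) ^ N *
      (ENNReal.ofReal (Real.exp (m * t)) * SimplexAux.Y μ m ^ (n + 1))
      = ENNReal.ofReal (Real.exp (m * t)) *
          (((n + 1 : ℕ) : ENNReal) ^ N * SimplexAux.Y μ m ^ (n + 1)) := fun n => by ring
  rw [tsum_congr heq, ENNReal.tsum_mul_left]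
  exact ENNReal.mul_lt_top ENNReal.ofReal_lt_top (SimplexAux.series_lt_top N hY)
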